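/- Let X be a real-valued random variable with mean μ and variance σ². Fix ε > 0 and let N ≥ 34·σ²/ε². Let Y₁, …, Y_K be independent sample means, each the average of N i.i.d. copies of X, and let μ̂ = median(Y₁, …, Y_K). Then Pr[|μ̂ − μ| ≥ ε] ≤ 2·exp(−K/2). -/

import Mathlib

open MeasureTheory ProbabilityTheory

/-- The median of `K` real numbers `f 0, …, f (K−1)`: sort them and take the middle entry. -/
noncomputable def median (K : ℕ) (f : Fin K → ℝ) : ℝ :=
  (((List.ofFn f).mergeSort fun a b => decide (a ≤ b)).getD (K / 2) 0)

lemma countP_eq_sum_map' {α : Type*} (l : List α) (q : α → Bool) :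
    l.countP q = (l.map fun a => if q a then 1 else 0).sum := by
  induction l with
  | nil => simp
  | cons a l ih => by_cases h : q a <;> simp [List.countP_cons, h, ih, Nat.add_comm]

lemma countP_ofFn' {K : ℕ} (f : Fin K → ℝ) (p : ℝ → Bool) :
    (List.ofFn f).countP p = (Finset.univ.filter (fun k => p (f k) = true)).card := by
  rw [countP_eq_sum_map', List.map_ofFn, List.sum_ofFn, Finset.card_filter]
  rfl

lemma median_count' {K : ℕ} (hK : 0 < K) (f : Fin K → ℝ) (μ ε : ℝ)
    (h : ε ≤ |median K f - μ|) :
    K - K / 2 ≤ (Finset.univ.filter (fun k => decide (ε ≤ |f k - μ|) = true)).card := by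
  classical
  set l := (List.ofFn f).mergeSort (fun a b => decide (a ≤ b)) with hl
  have hlen : l.length = K := by
    rw [hl, List.length_mergeSort, List.length_ofFn]
  have hsort : l.Pairwise (· ≤ ·) := by
    have := List.pairwise_mergeSort (le := fun a b : ℝ => decide (a ≤ b))
      (fun a b c hab hbc => by simp only [decide_eq_true_eq] at *; exact le_trans hab hbc)
      (fun a b => by simpa using le_total a b) (List.ofFn f)
    exact this.imp (fun h => by simpa using h)
  have hhalf : K / 2 < K := Nat.div_lt_self hK (by norm_num)
  have hm : median K f = l[K / 2]'(by omega) := by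
    rw [median, ← hl, List.getD_eq_getElem l 0 (by omega)]
  set q : ℝ → Bool := fun x => decide (ε ≤ |x - μ|) with hq
  have key : K - K / 2 ≤ l.countP q := by
    rcases le_abs.mp h with h1 | h1
    · have hall : ∀ x ∈ l.drop (K / 2), q x = true := by
        intro x hx
        obtain ⟨j, hj, rfl⟩ := List.mem_iff_getElem.mp hx
        rw [List.getElem_drop]
        have hlt : K / 2 + j < K := by
          have := hj; rw [List.length_drop, hlen] at this; omega
        have hle : l[K / 2]'(by omega) ≤ l[K / 2 + j]'(by omega) := by
          rcases Nat.eq_or_lt_of_le (Nat.le_add_right (K / 2) j) with he | hlt2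
          · simp [← he]
          · exact (List.pairwise_iff_getElem.mp hsort) _ _ (by omega) (by omega) hlt2
        rw [hq]
        simp only [decide_eq_true_eq]
        have : ε ≤ l[K / 2 + j]'(by omega) - μ := by
          rw [hm] at h1; linarith
        exact le_trans this (le_abs_self _)
      calc K - K / 2 = (l.drop (K / 2)).length := by rw [List.length_drop, hlen]
        _ = (l.drop (K / 2)).countP q := (List.countP_eq_length.mpr hall).symm
        _ ≤ l.countP q := by
            conv_rhs => rw [← List.take_append_drop (K / 2) l]
            rw [List.countP_append]; omega
    · have hall : ∀ x ∈ l.take (K / 2 + 1), q x = true := by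
        intro x hx
        obtain ⟨j, hj, rfl⟩ := List.mem_iff_getElem.mp hx
        have hjlt : j < K / 2 + 1 := by
          have := hj; rw [List.length_take, hlen] at this; omega
        rw [List.getElem_take]
        have hle : l[j]'(by omega) ≤ l[K / 2]'(by omega) := by
          rcases Nat.lt_or_ge j (K / 2) with hlt2 | hge
          · exact (List.pairwise_iff_getElem.mp hsort) _ _ (by omega) (by omega) hlt2
          · have : j = K / 2 := by omega
            simp [this]
        rw [hq]; simp only [decide_eq_true_eq]
        have : ε ≤ -(l[j]'(by omega) - μ) := by rw [hm] at h1; linarith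
        exact le_trans this (neg_le_abs _)
      have hcount : (l.take (K / 2 + 1)).countP q = K / 2 + 1 := by
        rw [List.countP_eq_length.mpr hall, List.length_take, hlen]; omega
      calc K - K / 2 ≤ K / 2 + 1 := by omega
        _ = (l.take (K / 2 + 1)).countP q := hcount.symm
        _ ≤ l.countP q := by
            conv_rhs => rw [← List.take_append_drop (K / 2 + 1) l]
            rw [List.countP_append]; omega
  have hperm : l.countP q = (List.ofFn f).countP q :=
    (List.mergeSort_perm (List.ofFn f) _).countP_eq q
  rw [hperm, countP_ofFn'] at key
  exact key

theorem stmt_2 {Ω : Type*} [MeasureSpace Ω] [IsProbabilityMeasure (ℙ : Measure Ω)]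
    (K N : ℕ) (hK : 0 < K) (hN : 0 < N)
    (X : Fin K → Fin N → Ω → ℝ) (X₀ : Ω → ℝ) (μ σ ε : ℝ) (hε : 0 < ε)
    (hmeas : ∀ k i, Measurable (X k i)) (hmeas₀ : Measurable X₀)
    (hL2 : MemLp X₀ 2 ℙ)
    (hmean : ∫ ω, X₀ ω = μ)
    (hvar : variance X₀ ℙ = σ ^ 2)
    (hident : ∀ k i, IdentDistrib (X k i) X₀ ℙ ℙ)
    (hindep : iIndepFun (fun p : Fin K × Fin N => X p.1 p.2) ℙ)
    (hNbig : (N : ℝ) ≥ 34 * σ ^ 2 / ε ^ 2) :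
    ℙ {ω | ε ≤ |median K (fun k => (∑ i, X k i ω) / N) - μ|}
      ≤ ENNReal.ofReal (2 * Real.exp (-(K : ℝ) / 2)) := by
  classical
  set A : Fin K → Set Ω := fun k => {ω | ε ≤ |(∑ i, X k i ω) / N - μ|} with hA
  have hNR : (0:ℝ) < N := by exact_mod_cast hN
  -- Step 1 : Chebyshev for each batch
  have hMem : ∀ p : Fin K × Fin N, MemLp (X p.1 p.2) 2 ℙ :=
    fun p => (hident p.1 p.2).symm.memLp_snd hL2
  have hCheb : ∀ k, ℙ (A k) ≤ ENNReal.ofReal (1/34) := by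
    intro k
    set s : Finset (Fin K × Fin N) := {k} ×ˢ Finset.univ with hs
    have hcard : s.card = N := by simp [hs]
    set Sk : Ω → ℝ := ∑ p ∈ s, (fun p : Fin K × Fin N => X p.1 p.2) p with hSk
    have hSkap : ∀ ω, Sk ω = ∑ i, X k i ω := by
      intro ω
      rw [hSk, Finset.sum_apply, hs, Finset.sum_product]
      simp
    have hvarSk : variance Sk ℙ = N * σ ^ 2 := by
      rw [hSk, IndepFun.variance_sum (fun p _ => hMem p)
        (fun p hp q hq hpq => hindep.indepFun hpq)]
      rw [Finset.sum_congr rfl (fun p _ => ((hident p.1 p.2).variance_eq).trans hvar)]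
      simp [hcard]
    have hmeanSk : (∫ ω, Sk ω) = N * μ := by
      rw [hSk]
      rw [show (∫ ω, (∑ p ∈ s, (fun p : Fin K × Fin N => X p.1 p.2) p) ω)
          = ∫ ω, ∑ p ∈ s, X p.1 p.2 ω by congr 1; ext ω; simp [Finset.sum_apply]]
      rw [integral_finset_sum _ (fun p _ => (hMem p).integrable one_le_two)]
      rw [Finset.sum_congr rfl (fun p _ => ((hident p.1 p.2).integral_eq).trans hmean)]
      simp [hcard]
    have hc : (0:ℝ) < N * ε := by positivity
    have cheb := meas_ge_le_variance_div_sq (μ := ℙ) ((memLp_finset_sum' s (fun p _ => hMem p))) hc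
    have hσ : (0:ℝ) ≤ σ ^ 2 := hvar ▸ variance_nonneg _ _
    have hsetEq : A k = {ω | N * ε ≤ |Sk ω - ∫ ω', Sk ω'|} := by
      ext ω
      simp only [hA, Set.mem_setOf_eq, hSkap ω, hmeanSk]
      rw [show (∑ i, X k i ω) / N - μ = ((∑ i, X k i ω) - N * μ) / N by field_simp]
      rw [abs_div, abs_of_pos hNR, le_div_iff₀ hNR]
      constructor <;> intro h <;> linarith
    have hnum : variance Sk ℙ / (N * ε) ^ 2 ≤ 1 / 34 := by
      rw [hvarSk, div_le_div_iff₀ (by positivity) (by norm_num)]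
      have h1 : 34 * σ ^ 2 ≤ N * ε ^ 2 := by
        rw [ge_iff_le, div_le_iff₀ (by positivity)] at hNbig
        linarith
      calc (N:ℝ) * σ ^ 2 * 34 = N * (34 * σ ^ 2) := by ring
        _ ≤ N * (N * ε ^ 2) := mul_le_mul_of_nonneg_left h1 hNR.le
        _ = 1 * (N * ε) ^ 2 := by ring
    rw [hsetEq]
    exact le_trans cheb (ENNReal.ofReal_le_ofReal hnum)
  -- Step 2 : independence of intersections
  have hXmeas : ∀ p : Fin K × Fin N, Measurable ((fun p : Fin K × Fin N => X p.1 p.2) p) :=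
    fun p => hmeas p.1 p.2
  set val : (T : Finset (Fin K × Fin N)) → ({x // x ∈ T} → ℝ) → Fin K → Fin N → ℝ :=
    fun T v k i => if h : (k, i) ∈ T then v ⟨(k, i), h⟩ else 0 with hval
  set B : (T : Finset (Fin K × Fin N)) → Fin K → Set ({x // x ∈ T} → ℝ) :=
    fun T k => {v | ε ≤ |(∑ i, val T v k i) / N - μ|} with hB
  have hBmeas : ∀ T k, MeasurableSet (B T k) := by
    intro T k
    have hvalm : ∀ i, Measurable (fun v => val T v k i) := by
      intro i
      by_cases h : (k, i) ∈ T
      · simpa [hval, h] using measurable_pi_apply (⟨(k, i), h⟩ : {x // x ∈ T})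
      · simpa [hval, h] using measurable_const
    have : Measurable fun v => |(∑ i, val T v k i) / N - μ| :=
      (((Finset.univ.measurable_sum (fun i _ => hvalm i)).div_const _).sub_const _).abs
    exact measurableSet_le measurable_const this
  have hpre : ∀ (T : Finset (Fin K × Fin N)) (k : Fin K), (∀ i : Fin N, (k, i) ∈ T) →
      (fun ω (q : {x // x ∈ T}) => X (↑q : Fin K × Fin N).1 (↑q : Fin K × Fin N).2 ω) ⁻¹' (B T k)
        = A k := by
    intro T k hT
    ext ω
    have hsum : (∑ i, val T (fun q : {x // x ∈ T} =>
        X (↑q : Fin K × Fin N).1 (↑q : Fin K × Fin N).2 ω) k i) = ∑ i, X k i ω :=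
      Finset.sum_congr rfl (fun i _ => by simp [hval, hT i])
    simp only [Set.mem_preimage, hB, Set.mem_setOf_eq, hA, hsum]
  have hInter : ∀ S : Finset (Fin K), ℙ (⋂ k ∈ S, A k) ≤ ENNReal.ofReal (1/34) ^ S.card := by
    intro S
    induction S using Finset.induction_on with
    | empty => simp
    | @insert a S haS ih =>
      have hdisj : Disjoint ({a} ×ˢ (Finset.univ : Finset (Fin N))) (S ×ˢ Finset.univ) := by
        rw [Finset.disjoint_left]
        intro p hp1 hp2
        rw [Finset.mem_product] at hp1 hp2
        simp only [Finset.mem_singleton] at hp1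
        exact haS (hp1.1 ▸ hp2.1)
      have hind := hindep.indepFun_finset _ _ hdisj hXmeas
      have h1 := hpre ({a} ×ˢ Finset.univ) a (fun i => by simp)
      have h2 : (fun ω (q : {x // x ∈ S ×ˢ (Finset.univ : Finset (Fin N))}) =>
          X (↑q : Fin K × Fin N).1 (↑q : Fin K × Fin N).2 ω) ⁻¹'
            (⋂ k ∈ S, B (S ×ˢ Finset.univ) k) = ⋂ k ∈ S, A k := by
        rw [Set.preimage_iInter₂]
        exact Set.iInter₂_congr
          (fun k hk => hpre (S ×ˢ Finset.univ) k (fun i => by simp [Finset.mem_product, hk]))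
      have hmul := hind.measure_inter_preimage_eq_mul
        (B ({a} ×ˢ Finset.univ) a) (⋂ k ∈ S, B (S ×ˢ Finset.univ) k)
        (hBmeas _ a) (MeasurableSet.biInter (Set.to_countable _) (fun k _ => hBmeas _ k))
      rw [h1, h2] at hmul
      rw [Finset.set_biInter_insert, Finset.card_insert_of_notMem haS, pow_succ]
      rw [hmul, mul_comm]
      exact mul_le_mul' ih (hCheb a)
  -- Step 3 : median deviation implies many batches deviate
  set m : ℕ := K - K / 2 with hm
  have hsub : {ω | ε ≤ |median K (fun k => (∑ i, X k i ω) / N) - μ|}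
      ⊆ ⋃ S ∈ Finset.univ.powersetCard m, ⋂ k ∈ S, A k := by
    intro ω hω
    have hcount := median_count' hK (fun k => (∑ i, X k i ω) / N) μ ε hω
    obtain ⟨S, hSsub, hScard⟩ := Finset.exists_subset_card_eq hcount
    refine Set.mem_biUnion (Finset.mem_powersetCard.mpr ⟨Finset.subset_univ S, hScard⟩) ?_
    refine Set.mem_iInter₂.mpr fun k hk => ?_
    have := hSsub hk
    rw [Finset.mem_filter] at this
    simpa [hA] using of_decide_eq_true this.2
  -- Step 4 : union bound and numerics
  have hbound : ℙ {ω | ε ≤ |median K (fun k => (∑ i, X k i ω) / N) - μ|}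
      ≤ ((K.choose m : ℕ) : ENNReal) * ENNReal.ofReal (1/34) ^ m := by
    calc ℙ {ω | ε ≤ |median K (fun k => (∑ i, X k i ω) / N) - μ|}
        ≤ ℙ (⋃ S ∈ Finset.univ.powersetCard m, ⋂ k ∈ S, A k) := measure_mono hsub
      _ ≤ ∑ S ∈ Finset.univ.powersetCard m, ℙ (⋂ k ∈ S, A k) := measure_biUnion_finset_le _ _
      _ ≤ ∑ S ∈ Finset.univ.powersetCard m, ENNReal.ofReal (1/34) ^ m := by
          refine Finset.sum_le_sum fun S hS => ?_
          have := hInter S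
          rwa [(Finset.mem_powersetCard.mp hS).2] at this
      _ = ((K.choose m : ℕ) : ENNReal) * ENNReal.ofReal (1/34) ^ m := by
          rw [Finset.sum_const, Finset.card_powersetCard, Finset.card_univ, Fintype.card_fin,
            nsmul_eq_mul]
  refine le_trans hbound ?_
  -- numerics
  have hmhalf : (K : ℝ) / 2 ≤ (m : ℝ) := by
    have : K ≤ 2 * m := by omega
    have := (Nat.cast_le (α := ℝ)).mpr this
    push_cast at this
    linarith
  have hofr : ((K.choose m : ℕ) : ENNReal) * ENNReal.ofReal (1/34) ^ m
      = ENNReal.ofReal ((K.choose m : ℝ) * (1/34 : ℝ) ^ m) := by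
    rw [ENNReal.ofReal_mul (by positivity), ← ENNReal.ofReal_pow (by norm_num),
      ENNReal.ofReal_natCast]
  rw [hofr]
  refine ENNReal.ofReal_le_ofReal ?_
  have hchoose : ((K.choose m : ℕ) : ℝ) ≤ (2 : ℝ) ^ K := by
    have h1 : K.choose m ≤ 2 ^ K := by
      rw [← Nat.sum_range_choose K]
      exact Finset.single_le_sum (fun i _ => Nat.zero_le _) (Finset.mem_range.mpr (by omega))
    exact_mod_cast h1
  have h34 : ((1:ℝ)/34) ^ m ≤ Real.exp (-(K:ℝ)/2) / (2:ℝ) ^ K := by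
    rw [le_div_iff₀ (by positivity : (0:ℝ) < (2:ℝ) ^ K)]
    have e1 : ((1:ℝ)/34) ^ m ≤ ((1:ℝ)/34) ^ ((K:ℝ)/2) := by
      rw [← Real.rpow_natCast (1/34 : ℝ) m]
      exact Real.rpow_le_rpow_of_exponent_ge (by norm_num) (by norm_num) hmhalf
    have e2 : (4:ℝ) ^ ((K:ℝ)/2) = (2:ℝ) ^ K := by
      rw [show (4:ℝ) = (2:ℝ) ^ (2:ℝ) by
          rw [show ((2:ℝ):ℝ) = ((2:ℕ):ℝ) by norm_num, Real.rpow_natCast]; norm_num,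
        ← Real.rpow_mul (by norm_num), show (2:ℝ) * ((K:ℝ)/2) = (K:ℝ) by ring,
        Real.rpow_natCast]
    have e3 : ((1:ℝ)/34) ^ ((K:ℝ)/2) * (4:ℝ) ^ ((K:ℝ)/2) = ((2:ℝ)/17) ^ ((K:ℝ)/2) := by
      rw [← Real.mul_rpow (by norm_num) (by norm_num)]
      norm_num
    have hbase : (2:ℝ)/17 ≤ Real.exp (-1) := by
      rw [Real.exp_neg]
      have h85 : Real.exp 1 ≤ 8.5 := le_of_lt (lt_trans Real.exp_one_lt_d9 (by norm_num))
      have hpos := Real.exp_pos 1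
      rw [inv_eq_one_div, le_div_iff₀ hpos]
      nlinarith
    have e4 : ((2:ℝ)/17) ^ ((K:ℝ)/2) ≤ Real.exp (-1) ^ ((K:ℝ)/2) :=
      Real.rpow_le_rpow (by norm_num) hbase (by positivity)
    have e5 : Real.exp (-1) ^ ((K:ℝ)/2) = Real.exp (-(K:ℝ)/2) := by
      rw [Real.rpow_def_of_pos (Real.exp_pos _), Real.log_exp]
      congr 1; ring
    calc ((1:ℝ)/34) ^ m * (2:ℝ) ^ K
        ≤ ((1:ℝ)/34) ^ ((K:ℝ)/2) * (2:ℝ) ^ K :=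
          mul_le_mul_of_nonneg_right e1 (by positivity)
      _ = ((2:ℝ)/17) ^ ((K:ℝ)/2) := by rw [← e2, e3]
      _ ≤ Real.exp (-1) ^ ((K:ℝ)/2) := e4
      _ = Real.exp (-(K:ℝ)/2) := e5
  calc ((K.choose m : ℕ) : ℝ) * (1/34 : ℝ) ^ m
      ≤ (2:ℝ) ^ K * ((1:ℝ)/34) ^ m := by
        exact mul_le_mul_of_nonneg_right hchoose (by positivity)
    _ ≤ (2:ℝ) ^ K * (Real.exp (-(K:ℝ)/2) / (2:ℝ) ^ K) := by
        exact mul_le_mul_of_nonneg_left h34 (by positivity)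
    _ = Real.exp (-(K:ℝ)/2) := by field_simp
    _ ≤ 2 * Real.exp (-(K:ℝ)/2) := by nlinarith [Real.exp_pos (-(K:ℝ)/2)]
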